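/- Let ξ_{AB} be a Hermitian matrix on A⊗B and σ_A a full-rank density matrix on A with dim B = d. Then ‖ξ_{AB}‖₁ ≤ √d · ‖σ_A^{-1/4} ξ_{AB} σ_A^{-1/4}‖₂, where ‖·‖₂ is the Hilbert–Schmidt norm. -/

import Mathlib

open Matrix Kronecker
open scoped ComplexOrder
open scoped MatrixOrder

/-- `√(M Mᴴ)`, the positive semidefinite absolute value of a matrix. -/
noncomputable def absM {n : Type*} [Fintype n] [DecidableEq n] (M : Matrix n n ℂ) :
    Matrix n n ℂ :=
  ((Matrix.posSemidef_self_mul_conjTranspose M).1.eigenvectorUnitary : Matrix n n ℂ) *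
    Matrix.diagonal ((↑) ∘ (√·) ∘ (Matrix.posSemidef_self_mul_conjTranspose M).1.eigenvalues) *
    (star (Matrix.posSemidef_self_mul_conjTranspose M).1.eigenvectorUnitary : Matrix n n ℂ)

/-- The trace norm `‖M‖₁ = Tr √(M Mᴴ)`. -/
noncomputable def traceNorm {n : Type*} [Fintype n] [DecidableEq n] (M : Matrix n n ℂ) : ℝ :=
  (absM M).trace.re

/-- The Hilbert–Schmidt (Frobenius) norm `‖M‖₂ = √(Tr[Mᴴ M])`. -/
noncomputable def frobNorm {n : Type*} [Fintype n] (M : Matrix n n ℂ) : ℝ :=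
  Real.sqrt ((Mᴴ * M).trace.re)

open Classical in
/-- Real power of a Hermitian matrix, defined by functional calculus on eigenvalues
(junk value `0` on non-Hermitian input). -/
noncomputable def hpow {n : Type*} [Fintype n] [DecidableEq n] (M : Matrix n n ℂ) (r : ℝ) :
    Matrix n n ℂ :=
  if hM : M.IsHermitian then
    (hM.eigenvectorUnitary : Matrix n n ℂ) *
      Matrix.diagonal (fun i => ((hM.eigenvalues i ^ r : ℝ) : ℂ)) *
      (star (hM.eigenvectorUnitary : Matrix n n ℂ))
  else 0

section Aux

variable {n : Type*} [Fintype n] [DecidableEq n]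

/-- Hilbert–Schmidt trace as a Euclidean inner product. -/
private lemma trace_conjTranspose_mul_eq_inner (X Y : Matrix n n ℂ) :
    (Xᴴ * Y).trace =
      (inner ℂ ((WithLp.equiv 2 ((n × n) → ℂ)).symm fun p => X p.1 p.2)
        ((WithLp.equiv 2 ((n × n) → ℂ)).symm fun p => Y p.1 p.2) : ℂ) := by
  rw [PiLp.inner_apply]
  simp only [WithLp.equiv_symm_apply, PiLp.toLp_apply, RCLike.inner_apply]
  rw [Matrix.trace, Fintype.sum_prod_type]
  simp only [Matrix.diag_apply, Matrix.mul_apply, Matrix.conjTranspose_apply]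
  rw [Finset.sum_comm]
  exact Finset.sum_congr rfl fun _ _ => Finset.sum_congr rfl fun _ _ => mul_comm _ _

/-- Cauchy–Schwarz for the Hilbert–Schmidt inner product of matrices. -/
private lemma trace_re_le_sqrt_mul_sqrt (X Y : Matrix n n ℂ) :
    (Xᴴ * Y).trace.re ≤
      Real.sqrt ((Xᴴ * X).trace.re) * Real.sqrt ((Yᴴ * Y).trace.re) := by
  set a : EuclideanSpace ℂ (n × n) := (WithLp.equiv 2 ((n × n) → ℂ)).symm fun p => X p.1 p.2
  set b : EuclideanSpace ℂ (n × n) := (WithLp.equiv 2 ((n × n) → ℂ)).symm fun p => Y p.1 p.2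
  have hXX : (Xᴴ * X).trace.re = ‖a‖ ^ 2 := by
    rw [trace_conjTranspose_mul_eq_inner, inner_self_eq_norm_sq_to_K (𝕜 := ℂ)]
    norm_cast
  have hYY : (Yᴴ * Y).trace.re = ‖b‖ ^ 2 := by
    rw [trace_conjTranspose_mul_eq_inner, inner_self_eq_norm_sq_to_K (𝕜 := ℂ)]
    norm_cast
  have hXY : (Xᴴ * Y).trace = (inner ℂ a b : ℂ) := trace_conjTranspose_mul_eq_inner X Y
  rw [hXY, hXX, hYY, Real.sqrt_sq (norm_nonneg a), Real.sqrt_sq (norm_nonneg b)]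
  exact (RCLike.re_le_norm _).trans (norm_inner_le_norm (𝕜 := ℂ) a b)

private lemma conj_mul_conj (U : Matrix n n ℂ) (hU : star U * U = 1) (d e : n → ℂ) :
    (U * Matrix.diagonal d * star U) * (U * Matrix.diagonal e * star U) =
      U * Matrix.diagonal (fun i => d i * e i) * star U := by
  have : Matrix.diagonal d * (star U * U) * Matrix.diagonal e
      = Matrix.diagonal fun i => d i * e i := by
    rw [hU, mul_one, Matrix.diagonal_mul_diagonal]
  calc (U * Matrix.diagonal d * star U) * (U * Matrix.diagonal e * star U)
      = U * (Matrix.diagonal d * (star U * U) * Matrix.diagonal e) * star U := by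
        simp only [Matrix.mul_assoc]
    _ = U * Matrix.diagonal (fun i => d i * e i) * star U := by rw [this]

private lemma conj_trace (U : Matrix n n ℂ) (hU : star U * U = 1) (D : Matrix n n ℂ) :
    (U * D * star U).trace = D.trace := by
  rw [Matrix.trace_mul_comm (U * D) (star U), ← Matrix.mul_assoc, hU, one_mul]

private lemma conj_herm (U : Matrix n n ℂ) (d : n → ℝ) :
    (U * Matrix.diagonal (fun i => (d i : ℂ)) * star U).IsHermitian := by
  have hd : (Matrix.diagonal (fun i => (d i : ℂ))).IsHermitian := by
    have h : (star fun i => ((d i : ℝ) : ℂ)) = fun i => ((d i : ℝ) : ℂ) := by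
      funext i
      simp [Complex.conj_ofReal]
    rw [Matrix.IsHermitian, Matrix.diagonal_conjTranspose, h]
  rw [Matrix.IsHermitian, Matrix.star_eq_conjTranspose]
  simp only [Matrix.conjTranspose_mul, Matrix.conjTranspose_conjTranspose, hd.eq,
    Matrix.mul_assoc]

private lemma conj_psd (U : Matrix n n ℂ) (d : n → ℝ) (hd : ∀ i, 0 ≤ d i) :
    (U * Matrix.diagonal (fun i => (d i : ℂ)) * star U).PosSemidef := by
  have hdiag : (Matrix.diagonal (fun i => (d i : ℂ))).PosSemidef := by
    rw [Matrix.posSemidef_diagonal_iff]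
    intro i
    exact Complex.zero_le_real.mpr (hd i)
  rw [Matrix.star_eq_conjTranspose]
  exact hdiag.mul_mul_conjTranspose_same U

private lemma kron_conjTranspose {m : Type*} [Fintype m]
    (X : Matrix n n ℂ) (Y : Matrix m m ℂ) : (X ⊗ₖ Y)ᴴ = Xᴴ ⊗ₖ Yᴴ := by
  ext ⟨i, j⟩ ⟨k, l⟩
  simp [Matrix.conjTranspose_apply, Matrix.kroneckerMap_apply]

variable {σ : Matrix n n ℂ}

private lemma hpow_eq (hσ : σ.IsHermitian) (r : ℝ) :
    hpow σ r = (hσ.eigenvectorUnitary : Matrix n n ℂ) *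
      Matrix.diagonal (fun i => ((hσ.eigenvalues i ^ r : ℝ) : ℂ)) *
      (star (hσ.eigenvectorUnitary : Matrix n n ℂ)) := by
  rw [hpow, dif_pos hσ]

private lemma star_mul_self_eigU (hσ : σ.IsHermitian) :
    star (hσ.eigenvectorUnitary : Matrix n n ℂ) * (hσ.eigenvectorUnitary : Matrix n n ℂ) = 1 :=
  Matrix.mem_unitaryGroup_iff'.mp hσ.eigenvectorUnitary.2

private lemma hpow_mul_hpow (hσ : σ.PosDef) (r s : ℝ) :
    hpow σ r * hpow σ s = hpow σ (r + s) := by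
  rw [hpow_eq hσ.1, hpow_eq hσ.1, hpow_eq hσ.1,
    conj_mul_conj _ (star_mul_self_eigU hσ.1)]
  have : (fun i => ((hσ.1.eigenvalues i ^ r : ℝ) : ℂ) * ((hσ.1.eigenvalues i ^ s : ℝ) : ℂ))
      = fun i => ((hσ.1.eigenvalues i ^ (r + s) : ℝ) : ℂ) := by
    funext i
    rw [← Complex.ofReal_mul, ← Real.rpow_add (hσ.eigenvalues_pos i)]
  rw [this]

private lemma hpow_zero (hσ : σ.IsHermitian) : hpow σ 0 = 1 := by
  rw [hpow_eq hσ]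
  have : (Matrix.diagonal fun i => ((hσ.eigenvalues i ^ (0 : ℝ) : ℝ) : ℂ)) = 1 := by
    simp [Real.rpow_zero, Matrix.diagonal_one]
  rw [this, mul_one]
  exact Matrix.mem_unitaryGroup_iff.mp hσ.eigenvectorUnitary.2

private lemma hpow_one (hσ : σ.IsHermitian) : hpow σ 1 = σ := by
  rw [hpow_eq hσ]
  have : (Matrix.diagonal fun i => ((hσ.eigenvalues i ^ (1 : ℝ) : ℝ) : ℂ))
      = Matrix.diagonal (RCLike.ofReal ∘ hσ.eigenvalues) := by
    have : (fun i => ((hσ.eigenvalues i ^ (1 : ℝ) : ℝ) : ℂ))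
        = (RCLike.ofReal ∘ hσ.eigenvalues) := by
      funext i
      rw [Real.rpow_one]
      rfl
    rw [this]
  rw [this]
  conv_rhs => rw [hσ.spectral_theorem, Unitary.conjStarAlgAut_apply]

private lemma hpow_herm (hσ : σ.IsHermitian) (r : ℝ) : (hpow σ r).IsHermitian := by
  rw [hpow_eq hσ]
  exact conj_herm _ _

end Aux

/-- For Hermitian ξ on A⊗B and a full-rank density matrix σ on A with d = dim B,
`‖ξ‖₁ ≤ √d · ‖σ^{-1/4} ξ σ^{-1/4}‖₂`, where σ^{-1/4} acts as σ^{-1/4} ⊗ 1_B. -/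
theorem traceNorm_le_sqrt_dim_mul_weighted_frobNorm {A B : Type*} [Fintype A] [DecidableEq A]
    [Fintype B] [DecidableEq B]
    (ξ : Matrix (A × B) (A × B) ℂ) (hξ : ξ.IsHermitian)
    (σ : Matrix A A ℂ) (hσ : σ.PosDef) (hσtr : σ.trace = 1) :
    traceNorm ξ ≤ Real.sqrt (Fintype.card B) *
      frobNorm ((hpow σ (-(1/4 : ℝ)) ⊗ₖ (1 : Matrix B B ℂ)) * ξ *
        (hpow σ (-(1/4 : ℝ)) ⊗ₖ (1 : Matrix B B ℂ))) := by
  classical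
  set V : Matrix (A × B) (A × B) ℂ := (hξ.eigenvectorUnitary : Matrix (A × B) (A × B) ℂ)
  have hV : star V * V = 1 := star_mul_self_eigU hξ
  set μ : (A × B) → ℝ := hξ.eigenvalues with hμdef
  set s : (A × B) → ℝ := fun i => if μ i < 0 then -1 else 1 with hsdef
  set S : Matrix (A × B) (A × B) ℂ :=
    V * Matrix.diagonal (fun i => (s i : ℂ)) * star V with hSdef
  have hspec : ξ = V * Matrix.diagonal (fun i => ((μ i : ℝ) : ℂ)) * star V := by
    have := hξ.spectral_theorem
    rw [Unitary.conjStarAlgAut_apply] at this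
    exact this
  have hSherm : S.IsHermitian := conj_herm V s
  have hS2 : S * S = 1 := by
    rw [hSdef, conj_mul_conj V hV]
    have : (Matrix.diagonal fun i => ((s i : ℂ)) * (s i : ℂ)) = 1 := by
      have : (fun i => ((s i : ℂ)) * (s i : ℂ)) = fun _ => 1 := by
        funext i
        rw [hsdef]
        by_cases h : μ i < 0 <;> simp [h]
      rw [this, Matrix.diagonal_one]
    rw [this, mul_one]
    exact Matrix.mem_unitaryGroup_iff.mp hξ.eigenvectorUnitary.2
  -- S * ξ = |ξ|
  have hSxi : S * ξ = absM ξ := by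
    have h1 : S * ξ = V * Matrix.diagonal (fun i => ((|μ i| : ℝ) : ℂ)) * star V := by
      rw [hSdef, hspec, conj_mul_conj V hV]
      have : (fun i => ((s i : ℝ) : ℂ) * ((μ i : ℝ) : ℂ))
          = fun i => ((|μ i| : ℝ) : ℂ) := by
        funext i
        rw [← Complex.ofReal_mul]
        congr 1
        rw [hsdef]
        rcases lt_or_ge (μ i) 0 with h | h
        · simp only [if_pos h]
          rw [abs_of_neg h]; ring
        · simp only [if_neg (not_lt.mpr h)]
          rw [abs_of_nonneg h]; ring
      rw [this]
    have hT : (V * Matrix.diagonal (fun i => ((|μ i| : ℝ) : ℂ)) * star V).PosSemidef :=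
      conj_psd V _ (fun i => abs_nonneg _)
    have hsq : (V * Matrix.diagonal (fun i => ((|μ i| : ℝ) : ℂ)) * star V) ^ 2 = ξ * ξᴴ := by
      rw [pow_two, conj_mul_conj V hV, hξ.eq]
      conv_rhs => rw [hspec]
      rw [conj_mul_conj V hV]
      have : (fun i => ((|μ i| : ℝ) : ℂ) * ((|μ i| : ℝ) : ℂ))
          = fun i => ((μ i : ℝ) : ℂ) * ((μ i : ℝ) : ℂ) := by
        funext i
        rw [← Complex.ofReal_mul, ← Complex.ofReal_mul, ← abs_mul, abs_mul_self]
      rw [this]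
    rw [h1]
    have hA := Matrix.posSemidef_self_mul_conjTranspose ξ
    have e1 : absM ξ = cfc Real.sqrt (ξ * ξᴴ) := by
      rw [hA.1.cfc_eq, Matrix.IsHermitian.cfc, Unitary.conjStarAlgAut_apply]; rfl
    rw [e1, ← cfcₙ_eq_cfc (hf0 := by simp), ← CFC.sqrt_eq_real_sqrt _ hA.nonneg]
    exact (CFC.sqrt_unique (by rw [← pow_two]; exact hsq) hT.nonneg).symm
  have htrace1 : traceNorm ξ = (S * ξ).trace.re := by rw [traceNorm, hSxi]
  -- the weighted matrices
  set N : Matrix (A × B) (A × B) ℂ := hpow σ (1/4 : ℝ) ⊗ₖ (1 : Matrix B B ℂ) with hNdef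
  set D : Matrix (A × B) (A × B) ℂ := hpow σ (-(1/4 : ℝ)) ⊗ₖ (1 : Matrix B B ℂ) with hDdef
  set Q : Matrix (A × B) (A × B) ℂ := hpow σ (1/2 : ℝ) ⊗ₖ (1 : Matrix B B ℂ) with hQdef
  set Y : Matrix (A × B) (A × B) ℂ := D * ξ * D with hYdef
  have h0 : (1/4 : ℝ) + -(1/4) = 0 := by norm_num
  have h0' : -(1/4 : ℝ) + 1/4 = 0 := by norm_num
  have hhalf : (1/4 : ℝ) + 1/4 = 1/2 := by norm_num
  have hone : (1/2 : ℝ) + 1/2 = 1 := by norm_num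
  have hND : N * D = 1 := by
    rw [hNdef, hDdef, ← Matrix.mul_kronecker_mul, hpow_mul_hpow hσ, h0, hpow_zero hσ.1]
    simp
  have hDN : D * N = 1 := by
    rw [hNdef, hDdef, ← Matrix.mul_kronecker_mul, hpow_mul_hpow hσ, h0', hpow_zero hσ.1]
    simp
  have hNN : N * N = Q := by
    rw [hNdef, hQdef, ← Matrix.mul_kronecker_mul, hpow_mul_hpow hσ, hhalf]
    simp
  have hQQ : Q * Q = σ ⊗ₖ (1 : Matrix B B ℂ) := by
    rw [hQdef, ← Matrix.mul_kronecker_mul, hpow_mul_hpow hσ, hone, hpow_one hσ.1]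
    simp
  have hNherm : N.IsHermitian := by
    rw [Matrix.IsHermitian, hNdef, kron_conjTranspose, (hpow_herm hσ.1 _).eq,
      Matrix.conjTranspose_one]
  have hQherm : Q.IsHermitian := by
    rw [Matrix.IsHermitian, hQdef, kron_conjTranspose, (hpow_herm hσ.1 _).eq,
      Matrix.conjTranspose_one]
  have hxiNYN : ξ = N * Y * N := by
    rw [hYdef]
    calc ξ = (N * D) * ξ * (D * N) := by rw [hND, hDN, one_mul, mul_one]
    _ = N * (D * ξ * D) * N := by simp only [Matrix.mul_assoc]
  -- trace of σ ⊗ 1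
  have htrQ2 : (σ ⊗ₖ (1 : Matrix B B ℂ)).trace.re = (Fintype.card B : ℝ) := by
    rw [Matrix.trace_kronecker, hσtr, one_mul, Matrix.trace_one]
    simp
  have hcardnn : (0 : ℝ) ≤ (Fintype.card B : ℝ) := Nat.cast_nonneg _
  -- first Cauchy–Schwarz: Tr[Sξ] = Tr[(NSN)ᴴ Y] ≤ ‖NSN‖₂ ‖Y‖₂
  set W : Matrix (A × B) (A × B) ℂ := N * S * N with hWdef
  have hWherm : Wᴴ = W := by
    rw [hWdef]
    simp only [Matrix.conjTranspose_mul, hNherm.eq, hSherm.eq, Matrix.mul_assoc]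
  have htr2 : (S * ξ).trace = (Wᴴ * Y).trace := by
    rw [hWherm, hWdef]
    conv_lhs => rw [hxiNYN]
    calc (S * (N * Y * N)).trace = ((S * N * Y) * N).trace := by simp only [Matrix.mul_assoc]
    _ = (N * (S * N * Y)).trace := by rw [Matrix.trace_mul_comm]
    _ = (N * S * N * Y).trace := by simp only [Matrix.mul_assoc]
  -- ‖W‖₂² = Tr[QSQS]
  have hWnorm : (Wᴴ * W).trace = ((Q * S) ᴴ * (S * Q)).trace := by
    have e1 : Wᴴ * W = N * S * (N * N) * S * N := by
      rw [hWherm, hWdef]; simp only [Matrix.mul_assoc]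
    have e2 : (Q * S)ᴴ * (S * Q) = S * Q * S * Q := by
      rw [Matrix.conjTranspose_mul, hQherm.eq, hSherm.eq]; simp only [Matrix.mul_assoc]
    rw [e1, e2, hNN]
    calc (N * S * Q * S * N).trace = ((N * S * Q * S) * N).trace := by
          simp only [Matrix.mul_assoc]
    _ = (N * (N * S * Q * S)).trace := by rw [Matrix.trace_mul_comm]
    _ = ((N * N) * S * Q * S).trace := by simp only [Matrix.mul_assoc]
    _ = ((S * Q * S) * Q).trace := by rw [hNN, Matrix.trace_mul_comm]; simp only [Matrix.mul_assoc]
    _ = (S * Q * S * Q).trace := by simp only [Matrix.mul_assoc]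
  -- second Cauchy–Schwarz: Tr[QSQS] ≤ Tr[Q²] = d
  have hQSQS : ((Q * S)ᴴ * (S * Q)).trace.re ≤ (Fintype.card B : ℝ) := by
    have h1 : ((Q * S)ᴴ * (Q * S)).trace = (σ ⊗ₖ (1 : Matrix B B ℂ)).trace := by
      rw [Matrix.conjTranspose_mul, hQherm.eq, hSherm.eq]
      calc (S * Q * (Q * S)).trace = (S * (Q * Q) * S).trace := by simp only [Matrix.mul_assoc]
      _ = ((S * (Q*Q)) * S).trace := by simp only [Matrix.mul_assoc]
      _ = (S * (S * (Q * Q))).trace := by rw [Matrix.trace_mul_comm]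
      _ = ((S * S) * (Q * Q)).trace := by simp only [Matrix.mul_assoc]
      _ = (σ ⊗ₖ (1 : Matrix B B ℂ)).trace := by rw [hS2, hQQ, one_mul]
    have h2 : ((S * Q)ᴴ * (S * Q)).trace = (σ ⊗ₖ (1 : Matrix B B ℂ)).trace := by
      rw [Matrix.conjTranspose_mul, hQherm.eq, hSherm.eq]
      calc (Q * S * (S * Q)).trace = (Q * (S * S) * Q).trace := by simp only [Matrix.mul_assoc]
      _ = (Q * Q).trace := by rw [hS2, mul_one]
      _ = (σ ⊗ₖ (1 : Matrix B B ℂ)).trace := by rw [hQQ]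
    calc ((Q * S)ᴴ * (S * Q)).trace.re
        ≤ Real.sqrt (((Q * S)ᴴ * (Q * S)).trace.re) *
          Real.sqrt (((S * Q)ᴴ * (S * Q)).trace.re) := trace_re_le_sqrt_mul_sqrt _ _
    _ = (Fintype.card B : ℝ) := by
        rw [h1, h2, htrQ2, Real.mul_self_sqrt hcardnn]
  -- assemble
  have hmain : traceNorm ξ ≤ Real.sqrt ((Wᴴ * W).trace.re) *
      Real.sqrt ((Yᴴ * Y).trace.re) := by
    rw [htrace1, htr2]
    exact trace_re_le_sqrt_mul_sqrt W Y
  have hWle : Real.sqrt ((Wᴴ * W).trace.re) ≤ Real.sqrt (Fintype.card B) := by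
    apply Real.sqrt_le_sqrt
    rw [hWnorm]
    exact hQSQS
  calc traceNorm ξ ≤ Real.sqrt ((Wᴴ * W).trace.re) * Real.sqrt ((Yᴴ * Y).trace.re) := hmain
  _ ≤ Real.sqrt (Fintype.card B) * Real.sqrt ((Yᴴ * Y).trace.re) :=
      mul_le_mul_of_nonneg_right hWle (Real.sqrt_nonneg _)
  _ = Real.sqrt (Fintype.card B) * frobNorm Y := rfl
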